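/- Let (X_n)_{n=0,...,N} be a Gaussian random vector. If for all 0 ≤ n < m ≤ N the support of the conditional law of (X_{n+1},...,X_m) given (X_0,...,X_n) is ℝ^{m−n} almost surely, then Var(X_n − X_{n−1} | X_0,...,X_{n−1}) > 0 for all n = 1,...,N. -/

import Mathlib

open MeasureTheory ProbabilityTheory Set

/-- A random vector is Gaussian if every linear combination of its coordinates is a
real Gaussian random variable. -/
def IsGaussianVector {Ω : Type*} [MeasurableSpace Ω] (P : Measure Ω) {n : ℕ}
    (X : Fin n → Ω → ℝ) : Prop :=
  ∀ l : Fin n → ℝ, ∃ m : ℝ, ∃ v : NNReal,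
    Measure.map (fun ω => ∑ i, l i * X i ω) P = gaussianReal m v

/-- Conditional variance of `X` given the σ-algebra `m`. -/
noncomputable def condVar {Ω : Type*} [m0 : MeasurableSpace Ω] (m : MeasurableSpace Ω)
    (X : Ω → ℝ) (P : @Measure Ω m0) : Ω → ℝ :=
  P[fun ω => (X ω - (P[X|m]) ω) ^ 2 | m]

section Aux

open Real

lemma integrable_sq_gaussianReal (m : ℝ) (v : NNReal) :
    Integrable (fun x : ℝ => x ^ 2) (gaussianReal m v) := by
  rcases eq_or_ne v 0 with hv | hv
  · rw [hv, gaussianReal_zero_var]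
    exact (integrable_const (m ^ 2)).congr (ae_eq_dirac (fun x : ℝ => x ^ 2)).symm
  · have hv' : (0 : ℝ) < v := by
      exact_mod_cast pos_iff_ne_zero.mpr hv
    set b : ℝ := (2 * (v : ℝ))⁻¹ with hb_def
    have hb : 0 < b := by positivity
    have h1 : Integrable (fun x : ℝ => x ^ 2 * Real.exp (-b * x ^ 2)) := by
      have h := integrable_rpow_mul_exp_neg_mul_sq hb (s := 2) (by norm_num)
      refine h.congr (ae_of_all _ fun x => ?_)
      show x ^ (2 : ℝ) * Real.exp (-b * x ^ 2) = x ^ 2 * Real.exp (-b * x ^ 2)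
      rw [show ((2 : ℝ)) = ((2 : ℕ) : ℝ) by norm_num, Real.rpow_natCast]
    have h2 : Integrable (fun x : ℝ => x * Real.exp (-b * x ^ 2)) :=
      integrable_mul_exp_neg_mul_sq hb
    have h3 : Integrable (fun x : ℝ => Real.exp (-b * x ^ 2)) :=
      integrable_exp_neg_mul_sq hb
    have hF : Integrable (fun x : ℝ => (x + m) ^ 2 * Real.exp (-b * x ^ 2)) :=
      ((h1.add (h2.const_mul (2 * m))).add (h3.const_mul (m ^ 2))).congr
        (ae_of_all _ fun x => by simp only [Pi.add_apply]; ring)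
    have hF' : Integrable (fun x : ℝ => x ^ 2 * Real.exp (-b * (x - m) ^ 2)) := by
      have h := hF.comp_sub_right m
      refine h.congr (ae_of_all _ fun x => ?_)
      have : x - m + m = x := by ring
      simp only [this]
    rw [gaussianReal_of_var_ne_zero _ hv,
      integrable_withDensity_iff (measurable_gaussianPDF _ _)
        (ae_of_all _ fun x => ENNReal.ofReal_lt_top)]
    refine (hF'.const_mul ((Real.sqrt (2 * π * v))⁻¹)).congr (ae_of_all _ fun x => ?_)
    have hexp : -b * (x - m) ^ 2 = -(x - m) ^ 2 / (2 * (v : ℝ)) := by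
      rw [hb_def, neg_mul, neg_div, inv_mul_eq_div]
    simp only [gaussianPDF_def]
    rw [ENNReal.toReal_ofReal (gaussianPDFReal_nonneg m v x)]
    simp only [gaussianPDFReal_def]
    rw [hexp]
    ring

lemma memLp_two_of_map_gaussianReal {Ω : Type*} [MeasurableSpace Ω] {P : Measure Ω}
    {Y : Ω → ℝ} (hY : Measurable Y) {m : ℝ} {v : NNReal}
    (h : Measure.map Y P = gaussianReal m v) : MemLp Y 2 P := by
  have h0 : MemLp (id : ℝ → ℝ) 2 (Measure.map Y P) := by
    rw [h, memLp_two_iff_integrable_sq aestronglyMeasurable_id]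
    exact integrable_sq_gaussianReal m v
  exact (memLp_map_measure_iff aestronglyMeasurable_id hY.aemeasurable).mp h0

lemma integral_sub_const_sq {V : Type*} [MeasurableSpace V] (μ : Measure V)
    [IsProbabilityMeasure μ] {φ : V → ℝ} (c : ℝ) (h1 : Integrable φ μ)
    (h2 : Integrable (fun v => φ v ^ 2) μ) :
    ∫ v, (φ v - c) ^ 2 ∂μ = ∫ v, φ v ^ 2 ∂μ - 2 * c * ∫ v, φ v ∂μ + c ^ 2 := by
  have hint : Integrable (fun v => φ v ^ 2 - 2 * c * φ v) μ := h2.sub (h1.const_mul (2 * c))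
  have heq : (fun v => (φ v - c) ^ 2) = fun v => (φ v ^ 2 - 2 * c * φ v) + c ^ 2 := by
    funext v; ring
  rw [heq, integral_add hint (integrable_const _),
    integral_sub h2 (h1.const_mul (2 * c)), integral_const_mul, integral_const]
  simp [measure_univ]

lemma sq_integral_le {V : Type*} [MeasurableSpace V] (μ : Measure V)
    [IsProbabilityMeasure μ] {φ : V → ℝ} (h1 : Integrable φ μ)
    (h2 : Integrable (fun v => φ v ^ 2) μ) :
    (∫ v, φ v ∂μ) ^ 2 ≤ ∫ v, φ v ^ 2 ∂μ := by
  have h0 : 0 ≤ ∫ v, (φ v - ∫ w, φ w ∂μ) ^ 2 ∂μ := integral_nonneg fun v => sq_nonneg _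
  rw [integral_sub_const_sq μ _ h1 h2] at h0
  nlinarith [h0]

lemma pos_integral_sq_of_full_support {d : ℕ} (μ : Measure (Fin d → ℝ))
    [IsProbabilityMeasure μ] (i0 : Fin d) (c : ℝ)
    (h1 : Integrable (fun v => v i0) μ) (h2 : Integrable (fun v => v i0 ^ 2) μ)
    (hs : ∀ U : Set (Fin d → ℝ), IsOpen U → U.Nonempty → 0 < μ U) :
    0 < ∫ v, (v i0 - c) ^ 2 ∂μ := by
  have hint : Integrable (fun v => (v i0 - c) ^ 2) μ := by
    have h : Integrable (fun v => (v i0 ^ 2 - 2 * c * v i0) + c ^ 2) μ :=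
      (h2.sub (h1.const_mul (2 * c))).add (integrable_const _)
    exact h.congr (ae_of_all _ fun v => by ring)
  rcases (integral_nonneg (μ := μ) (f := fun v : Fin d → ℝ => (v i0 - c) ^ 2) fun v => sq_nonneg ((v : Fin d → ℝ) i0 - c)).lt_or_eq with h | h
  · exact h
  · exfalso
    have hz : ∀ᵐ v ∂μ, (v i0 - c) ^ 2 = 0 :=
      (integral_eq_zero_iff_of_nonneg (fun v => sq_nonneg _) hint).mp h.symm
    have hnull : μ {v : Fin d → ℝ | ¬ (v i0 - c) ^ 2 = 0} = 0 := by
      simpa [ae_iff] using hz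
    have hU : IsOpen {v : Fin d → ℝ | v i0 ≠ c} :=
      IsOpen.preimage (continuous_apply i0) isOpen_ne
    have hne : ({v : Fin d → ℝ | v i0 ≠ c} : Set (Fin d → ℝ)).Nonempty := by
      refine ⟨fun _ => c + 1, by simp⟩
    have hpos := hs _ hU hne
    have hzero : μ {v : Fin d → ℝ | v i0 ≠ c} = 0 := by
      refine measure_mono_null ?_ hnull
      intro v hv
      simp only [mem_setOf_eq] at hv ⊢
      intro hc
      exact hv (by nlinarith [sq_nonneg (v i0 - c)])
    exact absurd hzero hpos.ne'

lemma key_condVar_pos {Ω E : Type*} [MeasurableSpace Ω] [MeasurableSpace E]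
    (P : Measure Ω) [IsProbabilityMeasure P] {d : ℕ} {Z : Ω → (Fin d → ℝ)} {W : Ω → E}
    (hZ : Measurable Z) (hW : Measurable W) (i0 : Fin d)
    (hL2 : MemLp (fun ω => Z ω i0) 2 P)
    (hsupp : ∀ᵐ ω ∂P, ∀ U : Set (Fin d → ℝ), IsOpen U → U.Nonempty →
      0 < condDistrib Z W P (W ω) U) :
    ∀ᵐ ω ∂P, 0 < _root_.condVar (MeasurableSpace.comap W inferInstance)
      (fun ω => Z ω i0) P ω := by
  have hm : MeasurableSpace.comap W inferInstance ≤ ‹MeasurableSpace Ω› := hW.comap_le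
  haveI : SigmaFinite (P.trim hm) := inferInstance
  set κ := condDistrib Z W P with hκ_def
  set Y : Ω → ℝ := fun ω => Z ω i0 with hY_def
  have hYmeas : Measurable Y := (measurable_pi_apply i0).comp hZ
  have hYint : Integrable Y P := hL2.integrable one_le_two
  have hY2int : Integrable (fun ω => Y ω ^ 2) P :=
    (memLp_two_iff_integrable_sq hYmeas.aestronglyMeasurable).mp hL2
  have hf1 : StronglyMeasurable (fun p : E × (Fin d → ℝ) => p.2 i0) :=
    ((measurable_pi_apply i0).comp measurable_snd).stronglyMeasurable
  have hf2 : StronglyMeasurable (fun p : E × (Fin d → ℝ) => p.2 i0 ^ 2) :=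
    (((measurable_pi_apply i0).comp measurable_snd).pow_const 2).stronglyMeasurable
  have hmapint1 : Integrable (fun p : E × (Fin d → ℝ) => p.2 i0)
      (P.map fun ω => (W ω, Z ω)) := by
    rw [integrable_map_measure hf1.aestronglyMeasurable (hW.prodMk hZ).aemeasurable]
    exact hYint
  have hmapint2 : Integrable (fun p : E × (Fin d → ℝ) => p.2 i0 ^ 2)
      (P.map fun ω => (W ω, Z ω)) := by
    rw [integrable_map_measure hf2.aestronglyMeasurable (hW.prodMk hZ).aemeasurable]
    exact hY2int
  have hκ1 : ∀ᵐ ω ∂P, Integrable (fun v : Fin d → ℝ => v i0) (κ (W ω)) :=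
    hmapint1.condDistrib_ae hW.aemeasurable hZ.aemeasurable
  have hκ2 : ∀ᵐ ω ∂P, Integrable (fun v : Fin d → ℝ => v i0 ^ 2) (κ (W ω)) :=
    hmapint2.condDistrib_ae hW.aemeasurable hZ.aemeasurable
  set G : E → ℝ := fun x => ∫ v, v i0 ∂κ x with hG_def
  have hGmeas : StronglyMeasurable G := hf1.integral_kernel_prod_right'
  have hHint : Integrable (fun ω => ∫ v, v i0 ^ 2 ∂κ (W ω)) P :=
    hmapint2.integral_condDistrib hW.aemeasurable hZ.aemeasurable
  have hGW2int : Integrable (fun ω => G (W ω) ^ 2) P := by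
    refine hHint.mono' (((hGmeas.measurable.comp hW).pow_const 2).aestronglyMeasurable) ?_
    filter_upwards [hκ1, hκ2] with ω h1 h2
    haveI : IsProbabilityMeasure (κ (W ω)) := inferInstance
    have hcs := sq_integral_le (κ (W ω)) h1 h2
    rw [Real.norm_eq_abs, abs_of_nonneg (sq_nonneg _)]
    exact hcs
  have hGWL2 : MemLp (fun ω => G (W ω)) 2 P :=
    (memLp_two_iff_integrable_sq (hGmeas.measurable.comp hW).aestronglyMeasurable).mpr hGW2int
  have hg : P[Y|MeasurableSpace.comap W inferInstance] =ᵐ[P] fun ω => G (W ω) :=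
    condExp_ae_eq_integral_condDistrib hW hZ.aemeasurable
      ((measurable_pi_apply i0).stronglyMeasurable) hYint
  have hVar1 : _root_.condVar (MeasurableSpace.comap W inferInstance) Y P =ᵐ[P] P[fun ω => (Y ω - G (W ω)) ^ 2|MeasurableSpace.comap W inferInstance] := by
    refine condExp_congr_ae ?_
    filter_upwards [hg] with ω hω
    rw [hω]
  have hprod : Integrable (fun ω => G (W ω) * Y ω) P := by
    have h := hL2.smul (φ := fun ω => G (W ω)) hGWL2
      (p := 2) (q := 2) (r := 1)
    exact memLp_one_iff_integrable.mp h
  have hint_sq : Integrable (fun ω => (Y ω - G (W ω)) ^ 2) P := by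
    have h : Integrable (fun ω => (Y ω ^ 2 - 2 * (G (W ω) * Y ω)) + G (W ω) ^ 2) P :=
      (hY2int.sub (hprod.const_mul 2)).add hGW2int
    exact h.congr (ae_of_all _ fun ω => by ring)
  have hVar2 : P[fun ω => (Y ω - G (W ω)) ^ 2|MeasurableSpace.comap W inferInstance] =ᵐ[P]
      fun ω => ∫ v, (v i0 - G (W ω)) ^ 2 ∂κ (W ω) := by
    have hfm : StronglyMeasurable (fun p : E × (Fin d → ℝ) => (p.2 i0 - G p.1) ^ 2) :=
      ((((measurable_pi_apply i0).comp measurable_snd).sub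
        (hGmeas.measurable.comp measurable_fst)).pow_const 2).stronglyMeasurable
    exact condExp_prod_ae_eq_integral_condDistrib hW hZ.aemeasurable hfm hint_sq
  filter_upwards [hVar1, hVar2, hκ1, hκ2, hsupp] with ω h1 h2 hk1 hk2 hsup
  rw [show _root_.condVar (MeasurableSpace.comap W inferInstance) Y P ω
      = ∫ v, (v i0 - G (W ω)) ^ 2 ∂κ (W ω) from h1.trans h2]
  haveI : IsProbabilityMeasure (κ (W ω)) := inferInstance
  exact pos_integral_sq_of_full_support (κ (W ω)) i0 (G (W ω)) hk1 hk2 hsup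

end Aux

/-- **Converse of the discrete-time CFS criterion.** If for all `0 ≤ n < m ≤ N` the
conditional law of `(X_{n+1},…,X_m)` given `(X_0,…,X_n)` has full support `ℝ^{m−n}`
almost surely, then `Var(X_n − X_{n−1} | X_0,…,X_{n−1}) > 0` for all `n = 1,…,N`. -/
theorem discrete_gaussian_CFS_converse {Ω : Type*} [MeasurableSpace Ω] (P : Measure Ω)
    [IsProbabilityMeasure P] (N : ℕ) (X : Fin (N + 1) → Ω → ℝ)
    (hmeas : ∀ i, Measurable (X i)) (hGauss : IsGaussianVector P X)
    (hsupp : ∀ n m : ℕ, ∀ hnm : n < m, ∀ hmN : m ≤ N,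
      ∀ᵐ ω ∂P, ∀ U : Set (Fin (m - n) → ℝ), IsOpen U → U.Nonempty →
        0 < condDistrib
            (fun ω (i : Fin (m - n)) => X ⟨n + 1 + i, by have := i.isLt; omega⟩ ω)
            (fun ω (i : Fin (n + 1)) => X ⟨i, by have := i.isLt; omega⟩ ω) P
            (fun i : Fin (n + 1) => X ⟨i, by have := i.isLt; omega⟩ ω) U) :
    ∀ n : ℕ, 1 ≤ n → (hN : n ≤ N) →
      ∀ᵐ ω ∂P, 0 < _root_.condVar
        (MeasurableSpace.comap (fun ω (i : Fin n) => X ⟨i, by have := i.isLt; omega⟩ ω)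
          inferInstance)
        (fun ω => X ⟨n, by omega⟩ ω - X ⟨n - 1, by omega⟩ ω) P ω := by
  intro n hn1 hN
  obtain ⟨k, rfl⟩ : ∃ k, n = k + 1 := ⟨n - 1, by omega⟩
  -- the coordinate functions
  have hXL2 : ∀ j : Fin (N + 1), MemLp (X j) 2 P := by
    intro j
    obtain ⟨mj, vj, hjv⟩ := hGauss (fun i => if i = j then 1 else 0)
    have hmap : Measure.map (X j) P = gaussianReal mj vj := by
      rw [← hjv]
      congr 1
      funext ω
      simp [ite_mul, Finset.sum_ite_eq']
    exact memLp_two_of_map_gaussianReal (hmeas j) hmap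
  set W : Ω → (Fin (k + 1) → ℝ) :=
    fun ω (i : Fin (k + 1)) => X ⟨i, by have := i.isLt; omega⟩ ω with hW_def
  set Z : Ω → (Fin (k + 1 - k) → ℝ) :=
    fun ω (i : Fin (k + 1 - k)) => X ⟨k + 1 + i, by have := i.isLt; omega⟩ ω with hZ_def
  have hWmeas : Measurable W := measurable_pi_lambda _ fun i => hmeas _
  have hZmeas : Measurable Z := measurable_pi_lambda _ fun i => hmeas _
  set i0 : Fin (k + 1 - k) := ⟨0, by omega⟩ with hi0_def
  have hm : MeasurableSpace.comap W inferInstance ≤ ‹MeasurableSpace Ω› := hWmeas.comap_le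
  haveI : SigmaFinite (P.trim hm) := inferInstance
  set A : Ω → ℝ := fun ω => Z ω i0 with hA_def
  set B : Ω → ℝ := fun ω => W ω ⟨k, Nat.lt_succ_self k⟩ with hB_def
  have hAL2 : MemLp A 2 P := hXL2 ⟨k + 1, by omega⟩
  have hAint : Integrable A P := hAL2.integrable one_le_two
  have hBint : Integrable B P := (hXL2 ⟨k, by omega⟩).integrable one_le_two
  have hB_m : StronglyMeasurable[MeasurableSpace.comap W inferInstance] B := by
    have hWm : Measurable[MeasurableSpace.comap W inferInstance] W := Measurable.of_comap_le le_rfl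
    exact ((measurable_pi_apply (⟨k, Nat.lt_succ_self k⟩ : Fin (k + 1))).comp hWm).stronglyMeasurable
  -- conditional expectation of A - B
  have hcondAB : P[fun ω => A ω - B ω|MeasurableSpace.comap W inferInstance] =ᵐ[P]
      fun ω => (P[A|MeasurableSpace.comap W inferInstance]) ω - B ω := by
    have h2 : P[fun ω => A ω - B ω|MeasurableSpace.comap W inferInstance] =ᵐ[P]
        P[A|MeasurableSpace.comap W inferInstance] - P[B|MeasurableSpace.comap W inferInstance] :=
      condExp_sub hAint hBint _
    have h3 : P[B|MeasurableSpace.comap W inferInstance] = B :=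
      condExp_of_stronglyMeasurable hm hB_m hBint
    filter_upwards [h2] with ω hω
    rw [hω, Pi.sub_apply, h3]
  have hcv : _root_.condVar (MeasurableSpace.comap W inferInstance) (fun ω => A ω - B ω) P =ᵐ[P]
      _root_.condVar (MeasurableSpace.comap W inferInstance) A P := by
    refine condExp_congr_ae ?_
    filter_upwards [hcondAB] with ω hω
    rw [hω]
    ring
  have hsupp' := hsupp k (k + 1) (Nat.lt_succ_self k) hN
  have hkey := key_condVar_pos P hZmeas hWmeas i0 hAL2 hsupp'
  filter_upwards [hcv, hkey] with ω h1 h2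
  exact lt_of_lt_of_eq h2 h1.symm
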